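/- Let ρ : {1,2,3,…} → ℝ and let F(z) = ∑_{n≥1} ( ∑_{T plane tree, |T|=n} (∏_{v∈T} 1/d(v)!)·(∏_{v∈T} ρ(h_v)) ) z^n be the formal power series over ℝ whose n-th coefficient is the total weight of all plane trees of size n, where each tree carries the degree weight ∏_v 1/d(v)! and the hook weight ∏_v ρ(h_v). Then for every n ≥ 1, [z^n]F(z) = ρ(n)·[z^{n-1}]exp(F(z)), where exp(F) = ∑_{k≥0} F^k/k! is the formal exponential of F. -/

import Mathlib

/-- A plane tree (ordered rooted tree): a root together with a finite
sequence of plane trees (its root subtrees). -/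
inductive PlaneTree : Type where
  | node : List PlaneTree → PlaneTree

namespace PlaneTree

/-- The size of a plane tree: its number of vertices. -/
def size : PlaneTree → ℕ
  | node ts => 1 + (ts.attach.map fun t => size t.1).sum
decreasing_by simp only [PlaneTree.node.sizeOf_spec]; have := List.sizeOf_lt_of_mem t.2; omega

/-- The degree weight `w_deg(T) = ∏_{v ∈ T} φ_{d(v)}`, where `d(v)` is the
out-degree of the vertex `v`. -/
noncomputable def degWeight (φ : ℕ → ℝ) : PlaneTree → ℝ
  | node ts => φ ts.length * (ts.attach.map fun t => degWeight φ t.1).prod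
decreasing_by simp only [PlaneTree.node.sizeOf_spec]; have := List.sizeOf_lt_of_mem t.2; omega

/-- The hook weight `w_h(T) = ∏_{v ∈ T} ρ(h_v)`, where the hook length `h_v`
is the number of vertices of the subtree of `T` rooted at `v`. -/
noncomputable def hookWeight (ρ : ℕ → ℝ) : PlaneTree → ℝ
  | node ts => ρ (size (node ts)) * (ts.attach.map fun t => hookWeight ρ t.1).prod
decreasing_by simp only [PlaneTree.node.sizeOf_spec]; have := List.sizeOf_lt_of_mem t.2; omega

instance : Inhabited PlaneTree := ⟨node []⟩

lemma size_node (ts : List PlaneTree) : (node ts).size = 1 + (ts.map size).sum := by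
  rw [size, List.attach_map_val]

lemma degWeight_node (φ : ℕ → ℝ) (ts : List PlaneTree) :
    degWeight φ (node ts) = φ ts.length * (ts.map (degWeight φ)).prod := by
  rw [degWeight, List.attach_map_val]

lemma hookWeight_node (ρ : ℕ → ℝ) (ts : List PlaneTree) :
    hookWeight ρ (node ts) = ρ ((node ts).size) * (ts.map (hookWeight ρ)).prod := by
  rw [hookWeight, List.attach_map_val]

def children : PlaneTree → List PlaneTree
  | node ts => ts

@[simp] lemma node_children (T : PlaneTree) : node T.children = T := by cases T; rfl

lemma one_le_size (T : PlaneTree) : 1 ≤ T.size := by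
  cases T with
  | node ts => rw [size_node]; omega

lemma length_le_sum (ts : List PlaneTree) : ts.length ≤ (ts.map size).sum := by
  induction ts with
  | nil => simp
  | cons h t ih => simp only [List.map_cons, List.sum_cons, List.length_cons]
                   have := one_le_size h; omega

lemma size_le_of_mem {t : PlaneTree} {ts : List PlaneTree} (h : t ∈ ts) :
    t.size ≤ (ts.map size).sum :=
  List.single_le_sum (fun _ _ => Nat.zero_le _) _ (List.mem_map_of_mem (f := size) h)

lemma finite_lists_of (S : Set PlaneTree) (hS : S.Finite) (L : ℕ) :
    {l : List PlaneTree | l.length ≤ L ∧ ∀ t ∈ l, t ∈ S}.Finite := by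
  haveI := hS.to_subtype
  have h2 : {l : List S | l.length ≤ L}.Finite := List.finite_length_le _ L
  apply (h2.image (List.map Subtype.val)).subset
  rintro l ⟨hlen, hmem⟩
  refine ⟨l.attach.map (fun t => ⟨t.1, hmem _ t.2⟩), by simpa using hlen, ?_⟩
  simp [List.map_map, List.attach_map_val]

lemma finite_size_le : ∀ n : ℕ, {T : PlaneTree | T.size ≤ n}.Finite
  | 0 => by
      convert Set.finite_empty
      ext T; simp only [Set.mem_setOf_eq, Set.mem_empty_iff_false, iff_false]
      have := one_le_size T; omega
  | (n+1) => by
      have IH := finite_size_le n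
      apply ((finite_lists_of _ IH n).image node).subset
      rintro ⟨ts⟩ hT
      rw [Set.mem_setOf_eq, size_node] at hT
      refine ⟨ts, ⟨?_, fun t ht => ?_⟩, rfl⟩
      · have := length_le_sum ts; omega
      · have := size_le_of_mem ht; simp only [Set.mem_setOf_eq]; omega

lemma finite_size_eq (n : ℕ) : {T : PlaneTree | T.size = n}.Finite :=
  (finite_size_le n).subset (fun _ h => le_of_eq h)

lemma finite_listsum (m : ℕ) :
    {l : List PlaneTree | (l.map size).sum = m}.Finite := by
  apply (finite_lists_of {T | T.size ≤ m} (finite_size_le m) m).subset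
  intro l hl
  simp only [Set.mem_setOf_eq] at hl
  exact ⟨by have := length_le_sum l; omega,
    fun t ht => by have := size_le_of_mem ht; simp only [Set.mem_setOf_eq]; omega⟩


end PlaneTree


namespace PlaneTree

/-- Finset of plane trees of size `n`. -/
noncomputable def TF (n : ℕ) : Finset PlaneTree := (finite_size_eq n).toFinset

@[simp] lemma mem_TF {n : ℕ} {T : PlaneTree} : T ∈ TF n ↔ T.size = n := by
  simp [TF, Set.Finite.mem_toFinset]

/-- Finset of lists of plane trees of length `k` with total size `m`. -/
noncomputable def LF (k m : ℕ) : Finset (List PlaneTree) :=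
  Set.Finite.toFinset (s := {l : List PlaneTree | l.length = k ∧ (l.map size).sum = m})
    ((finite_listsum m).subset (fun _ h => h.2))

@[simp] lemma mem_LF {k m : ℕ} {l : List PlaneTree} :
    l ∈ LF k m ↔ l.length = k ∧ (l.map size).sum = m := by
  simp [LF, Set.Finite.mem_toFinset]

/-- Finset of lists of plane trees with total size `m` (any length). -/
noncomputable def LL (m : ℕ) : Finset (List PlaneTree) := (finite_listsum m).toFinset

@[simp] lemma mem_LL {m : ℕ} {l : List PlaneTree} :
    l ∈ LL m ↔ (l.map size).sum = m := by
  simp [LL, Set.Finite.mem_toFinset]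

variable (φ ρ : ℕ → ℝ)

/-- combined weight -/
noncomputable def w (T : PlaneTree) : ℝ := degWeight φ T * hookWeight ρ T

lemma w_node (ts : List PlaneTree) :
    w φ ρ (node ts) = φ ts.length * ρ ((node ts).size) * (ts.map (w φ ρ)).prod := by
  unfold w
  rw [degWeight_node, hookWeight_node]
  have : ts.map (fun t => degWeight φ t * hookWeight ρ t)
      = ts.map (fun t => degWeight φ t * hookWeight ρ t) := rfl
  rw [show (ts.map fun t => degWeight φ t * hookWeight ρ t).prod
      = (ts.map (degWeight φ)).prod * (ts.map (hookWeight ρ)).prod from List.prod_map_mul]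
  ring

end PlaneTree


namespace PlaneTree

lemma LF_zero_zero : LF 0 0 = {([] : List PlaneTree)} := by
  ext l; simp only [mem_LF, Finset.mem_singleton, List.length_eq_zero_iff]
  constructor
  · rintro ⟨rfl, _⟩; rfl
  · rintro rfl; simp

lemma LF_zero_pos {m : ℕ} (hm : m ≠ 0) : LF 0 m = ∅ := by
  ext l; simp only [mem_LF, Finset.notMem_empty, iff_false, List.length_eq_zero_iff]
  rintro ⟨rfl, h⟩; simp at h; exact hm h.symm

variable {φ ρ : ℕ → ℝ} {F : PowerSeries ℝ}

lemma coeff_pow (hc : ∀ n, (PowerSeries.coeff n) F = ∑ T ∈ TF n, w φ ρ T) :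
    ∀ (k m : ℕ), (PowerSeries.coeff m) (F ^ k)
      = ∑ l ∈ LF k m, (l.map (w φ ρ)).prod := by
  intro k
  induction k with
  | zero =>
    intro m
    rcases eq_or_ne m 0 with rfl | hm
    · simp [LF_zero_zero]
    · simp [LF_zero_pos hm, PowerSeries.coeff_one, hm]
  | succ k ih =>
    intro m
    rw [pow_succ', PowerSeries.coeff_mul]
    calc ∑ p ∈ Finset.HasAntidiagonal.antidiagonal m,
            (PowerSeries.coeff p.1) F * (PowerSeries.coeff p.2) (F ^ k)
        = ∑ p ∈ Finset.HasAntidiagonal.antidiagonal m, ∑ x ∈ TF p.1 ×ˢ LF k p.2,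
            w φ ρ x.1 * ((x.2.map (w φ ρ)).prod) := by
          refine Finset.sum_congr rfl fun p _ => ?_
          rw [hc, ih, Finset.sum_mul_sum, Finset.sum_product]
      _ = ∑ x ∈ (Finset.HasAntidiagonal.antidiagonal m).sigma (fun p => TF p.1 ×ˢ LF k p.2),
            w φ ρ x.2.1 * ((x.2.2.map (w φ ρ)).prod) := by
          rw [Finset.sum_sigma]
      _ = ∑ l ∈ LF (k+1) m, (l.map (w φ ρ)).prod := by
          refine Finset.sum_nbij' (fun x => x.2.1 :: x.2.2)
            (fun l => ⟨(l.head!.size, (l.tail.map size).sum), (l.head!, l.tail)⟩)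
            ?_ ?_ ?_ ?_ ?_
          · rintro ⟨⟨a, b⟩, T, l⟩ hx
            simp only [Finset.mem_sigma, Finset.HasAntidiagonal.mem_antidiagonal, Finset.mem_product,
              mem_TF, mem_LF] at hx
            obtain ⟨hab, hT, hl, hs⟩ := hx
            simp only [mem_LF, List.length_cons, List.map_cons, List.sum_cons]
            omega
          · intro l hl
            simp only [mem_LF] at hl
            have hne : l ≠ [] := by intro h; rw [h] at hl; simp at hl
            simp only [Finset.mem_sigma, Finset.HasAntidiagonal.mem_antidiagonal, Finset.mem_product,
              mem_TF, mem_LF]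
            have hcons := List.cons_head!_tail hne
            refine ⟨?_, trivial, ?_, trivial⟩
            · rw [← hl.2]
              conv_rhs => rw [← hcons]
              simp only [List.map_cons, List.sum_cons]
            · have := congrArg List.length hcons
              simp only [List.length_cons] at this
              omega
          · rintro ⟨⟨a, b⟩, T, l⟩ hx
            simp only [Finset.mem_sigma, Finset.HasAntidiagonal.mem_antidiagonal, Finset.mem_product,
              mem_TF, mem_LF] at hx
            obtain ⟨hab, hT, hl, hs⟩ := hx
            simp only [List.head!_cons, List.tail_cons]
            subst hT hs
            rfl
          · intro l hl
            simp only [mem_LF] at hl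
            have hne : l ≠ [] := by intro h; rw [h] at hl; simp at hl
            exact List.cons_head!_tail hne
          · rintro ⟨⟨a, b⟩, T, l⟩ _
            simp

lemma root_decomp (n : ℕ) (hn : 1 ≤ n) :
    ∑ T ∈ TF n, w φ ρ T
      = ∑ l ∈ LL (n-1), φ l.length * ρ n * (l.map (w φ ρ)).prod := by
  refine Finset.sum_nbij' children node ?_ ?_ ?_ ?_ ?_
  · intro T hT
    cases T with
    | node ts =>
      simp only [mem_TF, size_node] at hT
      simp only [children, mem_LL]
      omega
  · intro l hl
    simp only [mem_LL] at hl
    simp only [mem_TF, size_node]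
    omega
  · intro T _; exact node_children T
  · intro l _; rfl
  · intro T hT
    cases T with
    | node ts =>
      simp only [mem_TF] at hT
      simp only [children]
      rw [w_node, hT]

lemma sum_LL (m : ℕ) (g : List PlaneTree → ℝ) :
    ∑ l ∈ LL m, g l = ∑ k ∈ Finset.range (m+1), ∑ l ∈ LF k m, g l := by
  rw [← Finset.sum_fiberwise_of_maps_to (g := List.length) (t := Finset.range (m+1))]
  · refine Finset.sum_congr rfl fun k _ => ?_
    refine Finset.sum_congr ?_ (fun _ _ => rfl)
    ext l
    simp only [Finset.mem_filter, mem_LL, mem_LF]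
    tauto
  · intro l hl
    simp only [mem_LL] at hl
    simp only [Finset.mem_range]
    have := length_le_sum l
    omega

end PlaneTree

open PlaneTree

/-- Composition `∑_{k ≥ 0} c_k F^k` of a coefficient sequence `c` with a formal
power series `F` having zero constant term. -/
noncomputable def seriesComp (c : ℕ → ℝ) (F : PowerSeries ℝ) : PowerSeries ℝ :=
  PowerSeries.mk fun n => ∑ k ∈ Finset.range (n + 1), c k * (PowerSeries.coeff n) (F ^ k)

/-- **Hook length formula for labelled (Cayley) trees** (the case `φ(t) = eᵗ`,
degree weights `φ_k = 1/k!`). If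
`F(z) = ∑_{n≥1} (∑_{|T|=n} (∏_{v∈T} 1/d(v)!)(∏_{v∈T} ρ(h_v))) zⁿ`, then for all
`n ≥ 1`, `[zⁿ]F(z) = ρ(n) · [z^{n-1}] exp(F(z))` with `exp(F) = ∑_{k≥0} F^k/k!`. -/
theorem hook_length_labelled_trees
    (ρ : ℕ → ℝ) (F : PowerSeries ℝ)
    (hF : F = PowerSeries.mk fun n =>
      ∑' T : {T : PlaneTree // T.size = n},
        T.1.degWeight (fun k => ((Nat.factorial k : ℝ))⁻¹) * T.1.hookWeight ρ)
    (n : ℕ) (hn : 1 ≤ n) :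
    (PowerSeries.coeff n) F
      = ρ n * (PowerSeries.coeff (n - 1))
          (seriesComp (fun k => ((Nat.factorial k : ℝ))⁻¹) F) := by

  set φ : ℕ → ℝ := fun k => ((Nat.factorial k : ℝ))⁻¹ with hφ
  have hc : ∀ m, (PowerSeries.coeff m) F = ∑ T ∈ TF m, w φ ρ T := by
    intro m
    rw [hF, PowerSeries.coeff_mk]
    letI : Fintype {T : PlaneTree // T.size = m} := (finite_size_eq m).fintype
    rw [tsum_fintype]
    exact (Finset.sum_subtype (TF m) (fun T => mem_TF) (w φ ρ)).symm
  rw [hc, root_decomp n hn, sum_LL, seriesComp, PowerSeries.coeff_mk, Finset.mul_sum]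
  refine Finset.sum_congr rfl fun k _ => ?_
  rw [coeff_pow hc, Finset.mul_sum, Finset.mul_sum]
  refine Finset.sum_congr rfl fun l hl => ?_
  simp only [mem_LF] at hl
  rw [hl.1]
  ring
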